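/- Let Γ be a good pointclass such that every set X ⊆ [ℕ]^ω belonging to Γ has the Ramsey property. Then there is no Dedekind-infinite maximal almost disjoint (MAD) family belonging to Γ. -/

import Mathlib

open Set

open Classical in
/-- The characteristic function of a set, viewed as a point of the Cantor space `α → Bool`. -/
noncomputable def chi {α : Type} (s : Set α) : α → Bool :=
  fun a => if a ∈ s then true else false

/-- A *good pointclass*: a collection of subsets of Polish spaces containing all clopen
sets and closed under countable intersections, countable unions, finite products,
continuous images, and continuous preimages. -/
structure GoodPointclass : Type 1 where
  mem : ∀ (X : Type) [TopologicalSpace X], Set (Set X)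
  clopen_mem : ∀ (X : Type) [TopologicalSpace X] [PolishSpace X] (s : Set X),
    IsClopen s → s ∈ mem X
  iInter_mem : ∀ (X : Type) [TopologicalSpace X] [PolishSpace X] (s : ℕ → Set X),
    (∀ n, s n ∈ mem X) → (⋂ n, s n) ∈ mem X
  iUnion_mem : ∀ (X : Type) [TopologicalSpace X] [PolishSpace X] (s : ℕ → Set X),
    (∀ n, s n ∈ mem X) → (⋃ n, s n) ∈ mem X
  prod_mem : ∀ (X Y : Type) [TopologicalSpace X] [PolishSpace X]
    [TopologicalSpace Y] [PolishSpace Y] (s : Set X) (t : Set Y),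
    s ∈ mem X → t ∈ mem Y → s ×ˢ t ∈ mem (X × Y)
  image_mem : ∀ (X Y : Type) [TopologicalSpace X] [PolishSpace X]
    [TopologicalSpace Y] [PolishSpace Y] (f : X → Y) (s : Set X),
    Continuous f → s ∈ mem X → f '' s ∈ mem Y
  preimage_mem : ∀ (X Y : Type) [TopologicalSpace X] [PolishSpace X]
    [TopologicalSpace Y] [PolishSpace Y] (f : X → Y) (t : Set Y),
    Continuous f → t ∈ mem Y → f ⁻¹' t ∈ mem X

/-- A set `X ⊆ [ℕ]^ω` has the Ramsey property. -/
def RamseyProp (X : Set (Set ℕ)) : Prop :=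
  ∃ H : Set ℕ, H.Infinite ∧
    ((∀ y : Set ℕ, y.Infinite → y ⊆ H → y ∈ X) ∨
     (∀ y : Set ℕ, y.Infinite → y ⊆ H → y ∉ X))

/-- `𝒜 ⊆ [ℕ]^ω` is a maximal almost disjoint family. -/
def IsMadFamily (𝒜 : Set (Set ℕ)) : Prop :=
  (∀ A ∈ 𝒜, A.Infinite) ∧
  (∀ A ∈ 𝒜, ∀ B ∈ 𝒜, A ≠ B → (A ∩ B).Finite) ∧
  (∀ x : Set ℕ, x.Infinite → ∃ A ∈ 𝒜, (x ∩ A).Infinite)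

set_option linter.unusedSectionVars false

namespace NoMadDev

lemma chi_eq_true_iff {α : Type} (s : Set α) (a : α) : chi s a = true ↔ a ∈ s := by
  unfold chi
  split <;> simp_all

lemma chi_of_setOf (g : ℕ → Bool) : chi {n | g n = true} = g := by
  funext n
  rcases Bool.dichotomy (g n) with h | h <;> simp [chi, h]


section Blocks

variable (f : ℕ → Set ℕ)

def Blk (n : ℕ) : Set ℕ := f n \ ⋃ i ∈ Set.Iio n, f i

noncomputable def code (a c : ℕ) : ℕ := Nat.nth (· ∈ Blk f a) c

/-- The key non-Ramsey set. -/
def OSet (𝒜 : Set (Set ℕ)) : Set (Set ℕ) :=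
  {x | x.Infinite ∧ ∃ A ∈ 𝒜,
    {i | code f (Nat.nth (· ∈ x) (4*i)) (Nat.nth (· ∈ x) (4*i+2)) ∈ A}.Infinite ∧
    {i | code f (Nat.nth (· ∈ x) (4*i+1)) (Nat.nth (· ∈ x) (4*i+3)) ∈ A}.Infinite}

variable {𝒜 : Set (Set ℕ)} {f}
variable (h1 : ∀ A ∈ 𝒜, A.Infinite)
  (h2 : ∀ A ∈ 𝒜, ∀ B ∈ 𝒜, A ≠ B → (A ∩ B).Finite)
  (hf : Function.Injective f) (hfm : ∀ n, f n ∈ 𝒜)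

include h1 h2 hf hfm in
lemma Blk_infinite (n : ℕ) : (Blk f n).Infinite := by
  have hsub : f n \ ⋃ i ∈ Set.Iio n, f i ⊇ f n \ ⋃ i ∈ Set.Iio n, (f n ∩ f i) := by
    intro x hx
    refine ⟨hx.1, fun hmem => hx.2 ?_⟩
    simp only [Set.mem_iUnion₂] at hmem ⊢
    obtain ⟨i, hi, hxi⟩ := hmem
    exact ⟨i, hi, ⟨hx.1, hxi⟩⟩
  have hfin : (⋃ i ∈ Set.Iio n, (f n ∩ f i)).Finite := by
    apply Set.Finite.biUnion (Set.finite_Iio n)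
    intro i hi
    have hin : i < n := hi
    have hne : f n ≠ f i := fun h => by have := hf h; omega
    exact h2 (f n) (hfm n) (f i) (hfm i) hne
  exact Set.Infinite.mono hsub ((h1 (f n) (hfm n)).diff hfin)

lemma Blk_subset (n : ℕ) : Blk f n ⊆ f n := Set.diff_subset

lemma Blk_disj_low {m n : ℕ} (hmn : m < n) : ∀ v ∈ Blk f n, v ∉ f m := by
  intro v hv hvm
  exact hv.2 (Set.mem_biUnion (Set.mem_Iio.mpr hmn) hvm)

lemma Blk_disjoint {m n : ℕ} (hmn : m ≠ n) : ∀ v, v ∈ Blk f m → v ∈ Blk f n → False := by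
  intro v hm hn
  rcases Nat.lt_or_ge m n with h | h
  · exact Blk_disj_low h v hn (Blk_subset m hm)
  · exact Blk_disj_low (Nat.lt_of_le_of_ne h (fun hh => hmn hh.symm)) v hm (Blk_subset n hn)

include h1 h2 hf hfm in
lemma setOf_Blk_infinite (n : ℕ) : {k | k ∈ Blk f n}.Infinite := by
  rw [Set.setOf_mem_eq]; exact Blk_infinite h1 h2 hf hfm n

include h1 h2 hf hfm in
lemma code_mem (a c : ℕ) : code f a c ∈ Blk f a :=
  Nat.nth_mem_of_infinite (setOf_Blk_infinite h1 h2 hf hfm a) c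

include h1 h2 hf hfm in
lemma code_strictMono (a : ℕ) : StrictMono (code f a) :=
  Nat.nth_strictMono (setOf_Blk_infinite h1 h2 hf hfm a)

include h1 h2 hf hfm in
lemma code_inj {a c a' c' : ℕ} (h : code f a c = code f a' c') : a = a' ∧ c = c' := by
  by_cases haa : a = a'
  · subst haa
    exact ⟨rfl, (code_strictMono h1 h2 hf hfm a).injective h⟩
  · exfalso
    apply Blk_disjoint haa (code f a c) (code_mem h1 h2 hf hfm a c)
    rw [h]; exact code_mem h1 h2 hf hfm a' c'

end Blocks

lemma nth_range_strictMono {u : ℕ → ℕ} (hu : StrictMono u) (k : ℕ) :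
    Nat.nth (· ∈ Set.range u) k = u k := by
  classical
  have hmem : u k ∈ Set.range u := ⟨k, rfl⟩
  have hcount : Nat.count (· ∈ Set.range u) (u k) = k := by
    rw [Nat.count_eq_card_filter_range]
    have he : (Finset.range (u k)).filter (· ∈ Set.range u) = (Finset.range k).image u := by
      ext m
      simp only [Finset.mem_filter, Finset.mem_range, Finset.mem_image, Set.mem_range]
      constructor
      · rintro ⟨hlt, j, rfl⟩
        exact ⟨j, hu.lt_iff_lt.mp hlt, rfl⟩
      · rintro ⟨j, hj, rfl⟩
        exact ⟨hu hj, j, rfl⟩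
    rw [he, Finset.card_image_of_injective _ hu.injective, Finset.card_range]
  conv_lhs => rw [← hcount]
  exact Nat.nth_count hmem

lemma infinite_iff_unbounded (T : Set ℕ) : T.Infinite ↔ ∀ N, ∃ n, N ≤ n ∧ n ∈ T := by
  constructor
  · intro hT N
    obtain ⟨n, hn, hgt⟩ := hT.exists_gt N
    exact ⟨n, le_of_lt hgt, hn⟩
  · intro h
    apply Set.infinite_of_not_bddAbove
    rintro ⟨b, hb⟩
    obtain ⟨n, hn, hnT⟩ := h (b+1)
    exact absurd (hb hnT) (by omega)

section Constructions

variable {𝒜 : Set (Set ℕ)} {f : ℕ → Set ℕ}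
variable (h1 : ∀ A ∈ 𝒜, A.Infinite)
  (h2 : ∀ A ∈ 𝒜, ∀ B ∈ 𝒜, A ≠ B → (A ∩ B).Finite)
  (h3 : ∀ x : Set ℕ, x.Infinite → ∃ A ∈ 𝒜, (x ∩ A).Infinite)
  (hf : Function.Injective f) (hfm : ∀ n, f n ∈ 𝒜)
  {H : Set ℕ} (hH : H.Infinite)

/-- enumeration of `H` -/
noncomputable def hs (H : Set ℕ) (k : ℕ) : ℕ := Nat.nth (· ∈ H) k

include hH in
lemma hs_strictMono : StrictMono (hs H) :=
  Nat.nth_strictMono (by rwa [Set.setOf_mem_eq])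

include hH in
lemma hs_mem (k : ℕ) : hs H k ∈ H :=
  Nat.nth_mem_of_infinite (by rwa [Set.setOf_mem_eq]) k

include hH in
lemma hs_le (k : ℕ) : k ≤ hs H k := (hs_strictMono hH).le_apply

include h1 h2 h3 hf hfm hH in
lemma supply : ∃ A₁, A₁ ∈ 𝒜 ∧ (∀ m, A₁ ≠ f m) ∧
    {j | code f (hs H (3*j)) (hs H (3*j+2)) ∈ A₁}.Infinite := by
  set val : ℕ → ℕ := fun j => code f (hs H (3*j)) (hs H (3*j+2)) with hval
  have hvalinj : Function.Injective val := by
    intro j j' h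
    have := (code_inj h1 h2 hf hfm h).1
    have h3j : 3*j = 3*j' := (hs_strictMono hH).injective this
    omega
  obtain ⟨A₁, hA₁, hint⟩ := h3 (Set.range val) (Set.infinite_range_of_injective hvalinj)
  have hS : {j | val j ∈ A₁}.Infinite := by
    intro hfin
    apply hint
    have : Set.range val ∩ A₁ ⊆ val '' {j | val j ∈ A₁} := by
      rintro z ⟨⟨j, rfl⟩, hz⟩
      exact ⟨j, hz, rfl⟩
    exact Set.Finite.subset (hfin.image val) this
  refine ⟨A₁, hA₁, ?_, hS⟩
  intro m heq
  apply hS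
  have hsub : {j | val j ∈ A₁} ⊆ {j | 3*j ≤ m} := by
    intro j hj
    simp only [Set.mem_setOf_eq] at hj ⊢
    by_contra hc
    have hlt : m < hs H (3*j) := by
      have := hs_le hH (3*j); omega
    apply Blk_disj_low hlt (val j) (code_mem h1 h2 hf hfm _ _)
    rw [← heq]
    exact hj
  exact Set.Finite.subset (Set.Finite.subset (Set.finite_Iic m) (by intro j hj; simp at hj ⊢; omega)) hsub


include h1 h2 hf hfm hH in
lemma none_refuter {A₁ : Set ℕ} (hA₁mem : A₁ ∈ 𝒜)
    (hS : {j | code f (hs H (3*j)) (hs H (3*j+2)) ∈ A₁}.Infinite) :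
    ∃ x, x ⊆ H ∧ x.Infinite ∧ x ∈ OSet f 𝒜 := by
  have pickS : ∀ bound : ℕ, ∃ j, code f (hs H (3*j)) (hs H (3*j+2)) ∈ A₁ ∧ bound < 3*j := by
    intro bound
    have hbad : {j | 3*j ≤ bound}.Finite :=
      Set.Finite.subset (Set.finite_Iic bound)
        (by intro j hj; simp only [Set.mem_setOf_eq] at hj; simp only [Set.mem_Iic]; omega)
    obtain ⟨j, hjS, hjn⟩ := (hS.diff hbad).nonempty
    refine ⟨j, hjS, ?_⟩
    simp only [Set.mem_setOf_eq] at hjn; omega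
  choose pick hpickS hpickGt using pickS
  set g2 : ℕ → ℕ × ℕ := fun t => Nat.rec (motive := fun _ => ℕ × ℕ)
      (⟨pick 0, pick (3 * pick 0 + 4)⟩)
      (fun _ prev => ⟨pick (3 * prev.2 + 2), pick (3 * pick (3 * prev.2 + 2) + 4)⟩) t with hg2def
  have hg2zero : g2 0 = ⟨pick 0, pick (3 * pick 0 + 4)⟩ := rfl
  have hg2succ : ∀ t, g2 (t+1) = ⟨pick (3 * (g2 t).2 + 2), pick (3 * pick (3 * (g2 t).2 + 2) + 4)⟩ :=
    fun t => rfl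
  have hjE_S : ∀ t, code f (hs H (3*(g2 t).1)) (hs H (3*(g2 t).1+2)) ∈ A₁ := by
    intro t; cases t with
    | zero => rw [hg2zero]; exact hpickS 0
    | succ n => rw [hg2succ]; exact hpickS _
  have hjO_S : ∀ t, code f (hs H (3*(g2 t).2)) (hs H (3*(g2 t).2+2)) ∈ A₁ := by
    intro t; cases t with
    | zero => rw [hg2zero]; exact hpickS _
    | succ n => rw [hg2succ]; exact hpickS _
  have hEO : ∀ t, 3 * (g2 t).1 + 4 < 3 * (g2 t).2 := by
    intro t; cases t with
    | zero => rw [hg2zero]; exact hpickGt _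
    | succ n => rw [hg2succ]; exact hpickGt _
  have hOE : ∀ t, 3 * (g2 t).2 + 2 < 3 * (g2 (t+1)).1 := by
    intro t; rw [hg2succ]; exact hpickGt _
  set idx : ℕ → ℕ := fun k =>
    if k % 8 ≤ 4 then 3 * (g2 (k/8)).1 + k % 8 else 3 * (g2 (k/8)).2 + (k % 8 - 5) with hidxdef
  have hidx_eval : ∀ k, idx k =
      if k % 8 ≤ 4 then 3 * (g2 (k/8)).1 + k % 8 else 3 * (g2 (k/8)).2 + (k % 8 - 5) :=
    fun _ => rfl
  have hidxmono : StrictMono idx := by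
    apply strictMono_nat_of_lt_succ
    intro k
    rw [hidx_eval k, hidx_eval (k+1)]
    have hEO' := hEO (k/8)
    have hOE' := hOE (k/8)
    rcases (by omega : ((k+1) % 8 = k % 8 + 1 ∧ (k+1)/8 = k/8) ∨ (k % 8 = 7 ∧ (k+1) % 8 = 0 ∧ (k+1)/8 = k/8 + 1)) with ⟨e1, e2⟩|⟨h7, e1, e2⟩
    · rw [e1, e2]
      split_ifs <;> omega
    · rw [h7, e1, e2]
      split_ifs <;> omega
  have humono : StrictMono (fun k => hs H (idx k)) := (hs_strictMono hH).comp hidxmono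
  refine ⟨Set.range (fun k => hs H (idx k)), ?_,
    Set.infinite_range_of_injective humono.injective, ?_⟩
  · rintro v ⟨k, rfl⟩; exact hs_mem hH _
  · simp only [OSet, Set.mem_setOf_eq]
    refine ⟨Set.infinite_range_of_injective humono.injective, A₁, hA₁mem, ?_, ?_⟩
    · have hsup : Set.range (fun t => 2*t) ⊆
          {i | code f (Nat.nth (· ∈ Set.range (fun k => hs H (idx k))) (4*i))
            (Nat.nth (· ∈ Set.range (fun k => hs H (idx k))) (4*i+2)) ∈ A₁} := by
        rintro i ⟨t, rfl⟩
        simp only [Set.mem_setOf_eq, nth_range_strictMono humono]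
        have e0 : idx (4*(2*t)) = 3 * (g2 t).1 := by
          have m1 : (4*(2*t)) % 8 = 0 := by omega
          have m2 : (4*(2*t)) / 8 = t := by omega
          rw [hidx_eval, m1, m2]
          split_ifs <;> omega
        have e2 : idx (4*(2*t)+2) = 3 * (g2 t).1 + 2 := by
          have m1 : (4*(2*t)+2) % 8 = 2 := by omega
          have m2 : (4*(2*t)+2) / 8 = t := by omega
          rw [hidx_eval, m1, m2]
          split_ifs <;> omega
        rw [e0, e2]
        exact hjE_S t
      exact Set.Infinite.mono hsup (Set.infinite_range_of_injective (fun a b hab => by omega))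
    · have hsup : Set.range (fun t => 2*t+1) ⊆
          {i | code f (Nat.nth (· ∈ Set.range (fun k => hs H (idx k))) (4*i+1))
            (Nat.nth (· ∈ Set.range (fun k => hs H (idx k))) (4*i+3)) ∈ A₁} := by
        rintro i ⟨t, rfl⟩
        simp only [Set.mem_setOf_eq, nth_range_strictMono humono]
        have e0 : idx (4*(2*t+1)+1) = 3 * (g2 t).2 := by
          have m1 : (4*(2*t+1)+1) % 8 = 5 := by omega
          have m2 : (4*(2*t+1)+1) / 8 = t := by omega
          rw [hidx_eval, m1, m2]
          split_ifs <;> omega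
        have e2 : idx (4*(2*t+1)+3) = 3 * (g2 t).2 + 2 := by
          have m1 : (4*(2*t+1)+3) % 8 = 7 := by omega
          have m2 : (4*(2*t+1)+3) / 8 = t := by omega
          rw [hidx_eval, m1, m2]
          split_ifs <;> omega
        rw [e0, e2]
        exact hjO_S t
      exact Set.Infinite.mono hsup (Set.infinite_range_of_injective (fun a b hab => by omega))

include h1 h2 hf hfm hH in
lemma all_refuter {A₁ : Set ℕ} (hA₁mem : A₁ ∈ 𝒜) (hA₁ne : ∀ m, A₁ ≠ f m)
    (hS : {j | code f (hs H (3*j)) (hs H (3*j+2)) ∈ A₁}.Infinite) :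
    ∃ x, x ⊆ H ∧ x.Infinite ∧ x ∉ OSet f 𝒜 := by
  have hbeta : ∀ a : ℕ, {c | code f a c ∈ A₁}.Finite := by
    intro a
    have hfinb : (A₁ ∩ Blk f a).Finite :=
      Set.Finite.subset (h2 A₁ hA₁mem (f a) (hfm a) (hA₁ne a))
        (Set.inter_subset_inter_right _ (Blk_subset a))
    have hpre : {c | code f a c ∈ A₁} = (code f a) ⁻¹' (A₁ ∩ Blk f a) := by
      ext c
      simp only [Set.mem_setOf_eq, Set.mem_preimage, Set.mem_inter_iff]
      exact ⟨fun h => ⟨h, code_mem h1 h2 hf hfm a c⟩, fun h => h.1⟩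
    rw [hpre]
    exact Set.Finite.preimage
      (Set.injOn_of_injective (code_strictMono h1 h2 hf hfm a).injective) hfinb
  have step : ∀ bound : ℕ, ∃ q : ℕ × ℕ, q.1 ∈ H ∧ bound < q.1 ∧
      code f (hs H (3*q.2)) (hs H (3*q.2+2)) ∈ A₁ ∧
      q.1 < hs H (3*q.2) ∧ code f q.1 (hs H (3*q.2+1)) ∉ A₁ := by
    intro bound
    obtain ⟨a, haH, hagt⟩ := hH.exists_gt bound
    have hS1 : {j | hs H (3*j) ≤ a}.Finite := by
      apply Set.Finite.subset (Set.finite_Iic a)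
      intro j hj
      simp only [Set.mem_setOf_eq] at hj
      have := hs_le hH (3*j)
      simp only [Set.mem_Iic]; omega
    have hS2 : {j | code f a (hs H (3*j+1)) ∈ A₁}.Finite := by
      have hsub : {j | code f a (hs H (3*j+1)) ∈ A₁} ⊆
          (fun j => hs H (3*j+1)) ⁻¹' {c | code f a c ∈ A₁} := fun j hj => hj
      apply Set.Finite.subset _ hsub
      apply Set.Finite.preimage _ (hbeta a)
      apply Set.injOn_of_injective
      intro j j' hjj
      have := (hs_strictMono hH).injective hjj
      omega
    obtain ⟨j, hj1, hj2⟩ := ((hS.diff hS1).diff hS2).nonempty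
    obtain ⟨hjS, hjS1⟩ := hj1
    simp only [Set.mem_setOf_eq] at hjS hjS1 hj2
    refine ⟨⟨a, j⟩, haH, hagt, ?_, ?_, ?_⟩
    · exact hjS
    · show a < hs H (3*j)
      omega
    · show code f a (hs H (3*j+1)) ∉ A₁
      exact hj2
  choose stepf hstep1 hstep2 hstep3 hstep4 hstep5 using step
  set g : ℕ → ℕ × ℕ := fun i => Nat.rec (motive := fun _ => ℕ × ℕ) (stepf 0)
      (fun _ prev => stepf (hs H (3 * prev.2 + 2))) i with hgdef
  have hgzero : g 0 = stepf 0 := rfl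
  have hgsucc : ∀ i, g (i+1) = stepf (hs H (3 * (g i).2 + 2)) := fun i => rfl
  have hspec : ∀ i, (g i).1 ∈ H ∧ code f (hs H (3*(g i).2)) (hs H (3*(g i).2+2)) ∈ A₁ ∧
      (g i).1 < hs H (3*(g i).2) ∧ code f (g i).1 (hs H (3*(g i).2+1)) ∉ A₁ := by
    intro i; cases i with
    | zero => rw [hgzero]; exact ⟨hstep1 0, hstep3 0, hstep4 0, hstep5 0⟩
    | succ n => rw [hgsucc]; exact ⟨hstep1 _, hstep3 _, hstep4 _, hstep5 _⟩
  have hgap : ∀ i, hs H (3*(g i).2 + 2) < (g (i+1)).1 := by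
    intro i; rw [hgsucc]; exact hstep2 _
  set u : ℕ → ℕ := fun k =>
    if k % 4 = 0 then (g (k/4)).1 else hs H (3*(g (k/4)).2 + (k % 4 - 1)) with hudef
  have hueval : ∀ k, u k =
      if k % 4 = 0 then (g (k/4)).1 else hs H (3*(g (k/4)).2 + (k % 4 - 1)) := fun _ => rfl
  have hu0 : ∀ i, u (4*i) = (g i).1 := by
    intro i; rw [hueval]
    have m1 : (4*i) % 4 = 0 := by omega
    have m2 : (4*i) / 4 = i := by omega
    rw [m1, m2, if_pos rfl]
  have hu1 : ∀ i, u (4*i+1) = hs H (3*(g i).2) := by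
    intro i; rw [hueval]
    have m1 : (4*i+1) % 4 = 1 := by omega
    have m2 : (4*i+1) / 4 = i := by omega
    rw [m1, m2, if_neg (by omega : ¬ (1:ℕ) = 0)]
    norm_num
  have hu2 : ∀ i, u (4*i+2) = hs H (3*(g i).2+1) := by
    intro i; rw [hueval]
    have m1 : (4*i+2) % 4 = 2 := by omega
    have m2 : (4*i+2) / 4 = i := by omega
    rw [m1, m2, if_neg (by omega : ¬ (2:ℕ) = 0)]
  have hu3 : ∀ i, u (4*i+3) = hs H (3*(g i).2+2) := by
    intro i; rw [hueval]
    have m1 : (4*i+3) % 4 = 3 := by omega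
    have m2 : (4*i+3) / 4 = i := by omega
    rw [m1, m2, if_neg (by omega : ¬ (3:ℕ) = 0)]
  have humono : StrictMono u := by
    apply strictMono_nat_of_lt_succ
    intro k
    rcases (by omega : k % 4 = 0 ∨ k % 4 = 1 ∨ k % 4 = 2 ∨ k % 4 = 3) with h|h|h|h
    · obtain ⟨i, rfl⟩ : ∃ i, k = 4*i := ⟨k/4, by omega⟩
      rw [show 4*i+1 = 4*i+1 from rfl, hu0 i, hu1 i]
      exact (hspec i).2.2.1
    · obtain ⟨i, rfl⟩ : ∃ i, k = 4*i+1 := ⟨k/4, by omega⟩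
      rw [show 4*i+1+1 = 4*i+2 by omega, hu1 i, hu2 i]
      exact hs_strictMono hH (by omega)
    · obtain ⟨i, rfl⟩ : ∃ i, k = 4*i+2 := ⟨k/4, by omega⟩
      rw [show 4*i+2+1 = 4*i+3 by omega, hu2 i, hu3 i]
      exact hs_strictMono hH (by omega)
    · obtain ⟨i, rfl⟩ : ∃ i, k = 4*i+3 := ⟨k/4, by omega⟩
      rw [show 4*i+3+1 = 4*(i+1) by omega, hu3 i, hu0 (i+1)]
      exact hgap i
  refine ⟨Set.range u, ?_, Set.infinite_range_of_injective humono.injective, ?_⟩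
  · rintro v ⟨k, rfl⟩
    rw [hueval]
    split
    · exact (hspec _).1
    · exact hs_mem hH _
  · intro hmem
    simp only [OSet, Set.mem_setOf_eq] at hmem
    obtain ⟨-, A, hA, hE, hO⟩ := hmem
    simp only [nth_range_strictMono humono] at hE hO
    have hAeq : A = A₁ := by
      by_contra hne
      have hfinAA : (A ∩ A₁).Finite := h2 A hA A₁ hA₁mem hne
      have hjmono : StrictMono (fun i => (g i).2) := by
        apply strictMono_nat_of_lt_succ
        intro i
        have hlt : hs H (3*(g i).2 + 2) < hs H (3*(g (i+1)).2) :=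
          lt_trans (hgap i) (hspec (i+1)).2.2.1
        have h32 := (hs_strictMono hH).lt_iff_lt.mp hlt
        omega
      have hwinj : Function.Injective
          (fun i => code f (hs H (3*(g i).2)) (hs H (3*(g i).2+2))) := by
        intro i i' hww
        have h' := (code_inj h1 h2 hf hfm hww).1
        have h'' := (hs_strictMono hH).injective h'
        exact hjmono.injective (by omega)
      have himg : (fun i => code f (hs H (3*(g i).2)) (hs H (3*(g i).2+2))) ''
          {i | code f (u (4*i+1)) (u (4*i+3)) ∈ A} ⊆ A ∩ A₁ := by
        rintro z ⟨i, hi, rfl⟩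
        simp only [Set.mem_setOf_eq] at hi
        rw [hu1, hu3] at hi
        exact ⟨hi, (hspec i).2.1⟩
      exact Set.Finite.not_infinite (Set.Finite.subset hfinAA himg)
        (hO.image (Set.injOn_of_injective hwinj))
    rw [hAeq] at hE
    obtain ⟨i, hi⟩ := hE.nonempty
    simp only [Set.mem_setOf_eq] at hi
    rw [hu0, hu2] at hi
    exact (hspec i).2.2.2 hi


end Constructions


section Gamma

instance : PolishSpace (ℕ → Bool) := {}

/-- The ambient product of two Cantor spaces. -/
abbrev Pr : Type := (ℕ → Bool) × (ℕ → Bool)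

lemma clopen_fst_eval (n : ℕ) : IsClopen {p : Pr | p.1 n = true} := by
  have h : {p : Pr | p.1 n = true} = (fun p : Pr => p.1 n) ⁻¹' {true} := rfl
  rw [h]
  exact (isClopen_discrete {true}).preimage ((continuous_apply n).comp continuous_fst)

lemma clopen_snd_eval (v : ℕ) : IsClopen {p : Pr | p.2 v = true} := by
  have h : {p : Pr | p.2 v = true} = (fun p : Pr => p.2 v) ⁻¹' {true} := rfl
  rw [h]
  exact (isClopen_discrete {true}).preimage ((continuous_apply v).comp continuous_snd)

lemma clopen_count (a : ℕ) : ∀ k : ℕ,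
    IsClopen {p : Pr | Nat.count (fun m => p.1 m = true) a = k} := by
  induction a with
  | zero =>
    intro k
    by_cases hk : k = 0
    · subst hk
      have h : {p : Pr | Nat.count (fun m => p.1 m = true) 0 = 0} = Set.univ := by
        ext p; simp [Nat.count_zero]
      rw [h]; exact isClopen_univ
    · have h : {p : Pr | Nat.count (fun m => p.1 m = true) 0 = k} = ∅ := by
        ext p; simp only [Set.mem_setOf_eq, Nat.count_zero, Set.mem_empty_iff_false, iff_false]
        omega
      rw [h]; exact isClopen_empty
  | succ a ih =>
    intro k
    cases k with
    | zero =>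
      have h : {p : Pr | Nat.count (fun m => p.1 m = true) (a+1) = 0}
          = {p : Pr | p.1 a = true}ᶜ ∩ {p : Pr | Nat.count (fun m => p.1 m = true) a = 0} := by
        ext p
        simp only [Set.mem_setOf_eq, Nat.count_succ, Set.mem_inter_iff, Set.mem_compl_iff]
        by_cases h' : p.1 a = true <;> simp [h'] <;> omega
      rw [h]
      exact ((clopen_fst_eval a).compl).inter (ih 0)
    | succ k' =>
      have h : {p : Pr | Nat.count (fun m => p.1 m = true) (a+1) = k'+1}
          = ({p : Pr | p.1 a = true} ∩ {p : Pr | Nat.count (fun m => p.1 m = true) a = k'})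
            ∪ ({p : Pr | p.1 a = true}ᶜ ∩ {p : Pr | Nat.count (fun m => p.1 m = true) a = k'+1}) := by
        ext p
        simp only [Set.mem_setOf_eq, Nat.count_succ, Set.mem_union, Set.mem_inter_iff,
          Set.mem_compl_iff]
        by_cases h' : p.1 a = true <;> simp [h'] <;> omega
      rw [h]
      exact (((clopen_fst_eval a).inter (ih k')).union (((clopen_fst_eval a).compl).inter (ih (k'+1))))

/-- "`a` is the `k`-th element of the set coded by the first coordinate". -/
def NthSet (k a : ℕ) : Set Pr :=
  {p : Pr | p.1 a = true} ∩ {p : Pr | Nat.count (fun m => p.1 m = true) a = k}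

lemma clopen_NthSet (k a : ℕ) : IsClopen (NthSet k a) :=
  (clopen_fst_eval a).inter (clopen_count a k)

def EPiece (f : ℕ → Set ℕ) (a c i : ℕ) : Set Pr :=
  (NthSet (4*i) a ∩ NthSet (4*i+2) c) ∩ {p : Pr | p.2 (code f a c) = true}

def OPiece (f : ℕ → Set ℕ) (a c i : ℕ) : Set Pr :=
  (NthSet (4*i+1) a ∩ NthSet (4*i+3) c) ∩ {p : Pr | p.2 (code f a c) = true}

lemma clopen_EPiece (f : ℕ → Set ℕ) (a c i : ℕ) : IsClopen (EPiece f a c i) :=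
  (((clopen_NthSet _ _).inter (clopen_NthSet _ _))).inter (clopen_snd_eval _)

lemma clopen_OPiece (f : ℕ → Set ℕ) (a c i : ℕ) : IsClopen (OPiece f a c i) :=
  (((clopen_NthSet _ _).inter (clopen_NthSet _ _))).inter (clopen_snd_eval _)

def SInf : Set Pr := ⋂ N, ⋃ n, (if N ≤ n then {p : Pr | p.1 n = true} else ∅)

def SEset (f : ℕ → Set ℕ) : Set Pr :=
  ⋂ N, ⋃ m, (if N ≤ (Denumerable.ofNat (ℕ × ℕ × ℕ) m).2.2 then
    EPiece f (Denumerable.ofNat (ℕ × ℕ × ℕ) m).1 (Denumerable.ofNat (ℕ × ℕ × ℕ) m).2.1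
      (Denumerable.ofNat (ℕ × ℕ × ℕ) m).2.2 else ∅)

def SOset (f : ℕ → Set ℕ) : Set Pr :=
  ⋂ N, ⋃ m, (if N ≤ (Denumerable.ofNat (ℕ × ℕ × ℕ) m).2.2 then
    OPiece f (Denumerable.ofNat (ℕ × ℕ × ℕ) m).1 (Denumerable.ofNat (ℕ × ℕ × ℕ) m).2.1
      (Denumerable.ofNat (ℕ × ℕ × ℕ) m).2.2 else ∅)

variable (Γ : GoodPointclass)

lemma gamma_inter {X : Type} [TopologicalSpace X] [PolishSpace X] {U V : Set X}
    (hU : U ∈ Γ.mem X) (hV : V ∈ Γ.mem X) : U ∩ V ∈ Γ.mem X := by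
  have h : U ∩ V = ⋂ n : ℕ, (if n = 0 then U else V) := by
    ext z
    simp only [Set.mem_inter_iff, Set.mem_iInter]
    constructor
    · rintro ⟨hzU, hzV⟩ n
      by_cases hn : n = 0
      · rw [if_pos hn]; exact hzU
      · rw [if_neg hn]; exact hzV
    · intro h
      constructor
      · have := h 0; rwa [if_pos rfl] at this
      · have := h 1; rwa [if_neg (by omega)] at this
  rw [h]
  apply Γ.iInter_mem
  intro n
  by_cases hn : n = 0
  · rw [if_pos hn]; exact hU
  · rw [if_neg hn]; exact hV

lemma gamma_clopen {X : Type} [TopologicalSpace X] [PolishSpace X] {U : Set X}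
    (hU : IsClopen U) : U ∈ Γ.mem X := Γ.clopen_mem X U hU

lemma SInf_gamma : SInf ∈ Γ.mem Pr := by
  apply Γ.iInter_mem
  intro N
  apply Γ.iUnion_mem
  intro n
  by_cases h : N ≤ n
  · rw [if_pos h]; exact gamma_clopen Γ (clopen_fst_eval n)
  · rw [if_neg h]; exact gamma_clopen Γ isClopen_empty

lemma SEset_gamma (f : ℕ → Set ℕ) : SEset f ∈ Γ.mem Pr := by
  apply Γ.iInter_mem
  intro N
  apply Γ.iUnion_mem
  intro m
  by_cases h : N ≤ (Denumerable.ofNat (ℕ × ℕ × ℕ) m).2.2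
  · rw [if_pos h]; exact gamma_clopen Γ (clopen_EPiece f _ _ _)
  · rw [if_neg h]; exact gamma_clopen Γ isClopen_empty

lemma SOset_gamma (f : ℕ → Set ℕ) : SOset f ∈ Γ.mem Pr := by
  apply Γ.iInter_mem
  intro N
  apply Γ.iUnion_mem
  intro m
  by_cases h : N ≤ (Denumerable.ofNat (ℕ × ℕ × ℕ) m).2.2
  · rw [if_pos h]; exact gamma_clopen Γ (clopen_OPiece f _ _ _)
  · rw [if_neg h]; exact gamma_clopen Γ isClopen_empty

/- translation lemmas -/

lemma count_transfer (p q : ℕ → Prop) [DecidablePred p] [DecidablePred q]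
    (h : ∀ n, p n ↔ q n) (a : ℕ) : Nat.count p a = Nat.count q a := by
  rw [Nat.count_eq_card_filter_range, Nat.count_eq_card_filter_range]
  congr 1
  apply Finset.filter_congr
  intro m _
  exact h m

open Classical in
lemma nth_cond_iff {x : Set ℕ} (hx : x.Infinite) (g : ℕ → Bool) (k a : ℕ) :
    ((chi x, g) ∈ NthSet k a) ↔ Nat.nth (· ∈ x) k = a := by
  classical
  have hinf : {n | n ∈ x}.Infinite := by rwa [Set.setOf_mem_eq]
  have htrans : ∀ b : ℕ, Nat.count (fun m => chi x m = true) b = Nat.count (· ∈ x) b :=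
    fun b => count_transfer _ _ (fun n => chi_eq_true_iff x n) b
  constructor
  · rintro ⟨h1', h2'⟩
    simp only [Set.mem_setOf_eq] at h1' h2'
    have ha : a ∈ x := (chi_eq_true_iff x a).mp h1'
    have hcount : Nat.count (· ∈ x) a = k := by rw [← htrans a]; exact h2'
    rw [← hcount]
    exact Nat.nth_count ha
  · rintro rfl
    constructor
    · simp only [Set.mem_setOf_eq]
      exact (chi_eq_true_iff x _).mpr (Nat.nth_mem_of_infinite hinf k)
    · simp only [Set.mem_setOf_eq]
      rw [htrans]
      exact Nat.count_nth_of_infinite hinf k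

lemma SInf_iff (x : Set ℕ) (g : ℕ → Bool) : ((chi x, g) ∈ SInf) ↔ x.Infinite := by
  constructor
  · intro h
    rw [infinite_iff_unbounded]
    intro N
    rw [SInf, Set.mem_iInter] at h
    have hU := h N
    rw [Set.mem_iUnion] at hU
    obtain ⟨n, hn⟩ := hU
    by_cases hle : N ≤ n
    · rw [if_pos hle] at hn
      simp only [Set.mem_setOf_eq] at hn
      exact ⟨n, hle, (chi_eq_true_iff x n).mp hn⟩
    · rw [if_neg hle] at hn
      exact absurd hn (Set.notMem_empty _)
  · intro hx
    rw [SInf, Set.mem_iInter]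
    intro N
    rw [Set.mem_iUnion]
    obtain ⟨n, hn, hnx⟩ := (infinite_iff_unbounded x).mp hx N
    refine ⟨n, ?_⟩
    rw [if_pos hn]
    simp only [Set.mem_setOf_eq]
    exact (chi_eq_true_iff x n).mpr hnx

lemma SEset_iff (f : ℕ → Set ℕ) {x : Set ℕ} (hx : x.Infinite) (A : Set ℕ) :
    ((chi x, chi A) ∈ SEset f) ↔
      {i | code f (Nat.nth (· ∈ x) (4*i)) (Nat.nth (· ∈ x) (4*i+2)) ∈ A}.Infinite := by
  constructor
  · intro h
    rw [infinite_iff_unbounded]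
    intro N
    rw [SEset, Set.mem_iInter] at h
    have hU := h N
    rw [Set.mem_iUnion] at hU
    obtain ⟨m, hm⟩ := hU
    by_cases hle : N ≤ (Denumerable.ofNat (ℕ × ℕ × ℕ) m).2.2
    · rw [if_pos hle] at hm
      obtain ⟨⟨hn1, hn2⟩, hval⟩ := hm
      have e1 := (nth_cond_iff hx _ _ _).mp hn1
      have e2 := (nth_cond_iff hx _ _ _).mp hn2
      refine ⟨(Denumerable.ofNat (ℕ × ℕ × ℕ) m).2.2, hle, ?_⟩
      simp only [Set.mem_setOf_eq] at hval ⊢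
      rw [e1, e2]
      exact (chi_eq_true_iff A _).mp hval
    · rw [if_neg hle] at hm
      exact absurd hm (Set.notMem_empty _)
  · intro hinf
    rw [SEset, Set.mem_iInter]
    intro N
    rw [Set.mem_iUnion]
    obtain ⟨i, hiN, hiT⟩ := (infinite_iff_unbounded _).mp hinf N
    simp only [Set.mem_setOf_eq] at hiT
    refine ⟨Encodable.encode ((Nat.nth (· ∈ x) (4*i), Nat.nth (· ∈ x) (4*i+2), i) : ℕ × ℕ × ℕ), ?_⟩
    rw [Denumerable.ofNat_encode]
    rw [if_pos (show N ≤ ((Nat.nth (· ∈ x) (4*i), Nat.nth (· ∈ x) (4*i+2), i) : ℕ × ℕ × ℕ).2.2 from hiN)]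
    refine ⟨⟨?_, ?_⟩, ?_⟩
    · exact (nth_cond_iff hx _ _ _).mpr rfl
    · exact (nth_cond_iff hx _ _ _).mpr rfl
    · simp only [Set.mem_setOf_eq]
      exact (chi_eq_true_iff A _).mpr hiT

lemma SOset_iff (f : ℕ → Set ℕ) {x : Set ℕ} (hx : x.Infinite) (A : Set ℕ) :
    ((chi x, chi A) ∈ SOset f) ↔
      {i | code f (Nat.nth (· ∈ x) (4*i+1)) (Nat.nth (· ∈ x) (4*i+3)) ∈ A}.Infinite := by
  constructor
  · intro h
    rw [infinite_iff_unbounded]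
    intro N
    rw [SOset, Set.mem_iInter] at h
    have hU := h N
    rw [Set.mem_iUnion] at hU
    obtain ⟨m, hm⟩ := hU
    by_cases hle : N ≤ (Denumerable.ofNat (ℕ × ℕ × ℕ) m).2.2
    · rw [if_pos hle] at hm
      obtain ⟨⟨hn1, hn2⟩, hval⟩ := hm
      have e1 := (nth_cond_iff hx _ _ _).mp hn1
      have e2 := (nth_cond_iff hx _ _ _).mp hn2
      refine ⟨(Denumerable.ofNat (ℕ × ℕ × ℕ) m).2.2, hle, ?_⟩
      simp only [Set.mem_setOf_eq] at hval ⊢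
      rw [e1, e2]
      exact (chi_eq_true_iff A _).mp hval
    · rw [if_neg hle] at hm
      exact absurd hm (Set.notMem_empty _)
  · intro hinf
    rw [SOset, Set.mem_iInter]
    intro N
    rw [Set.mem_iUnion]
    obtain ⟨i, hiN, hiT⟩ := (infinite_iff_unbounded _).mp hinf N
    simp only [Set.mem_setOf_eq] at hiT
    refine ⟨Encodable.encode ((Nat.nth (· ∈ x) (4*i+1), Nat.nth (· ∈ x) (4*i+3), i) : ℕ × ℕ × ℕ), ?_⟩
    rw [Denumerable.ofNat_encode]
    rw [if_pos (show N ≤ ((Nat.nth (· ∈ x) (4*i+1), Nat.nth (· ∈ x) (4*i+3), i) : ℕ × ℕ × ℕ).2.2 from hiN)]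
    refine ⟨⟨?_, ?_⟩, ?_⟩
    · exact (nth_cond_iff hx _ _ _).mpr rfl
    · exact (nth_cond_iff hx _ _ _).mpr rfl
    · simp only [Set.mem_setOf_eq]
      exact (chi_eq_true_iff A _).mpr hiT

lemma OSet_gamma (f : ℕ → Set ℕ) {𝒜 : Set (Set ℕ)}
    (hmem : chi '' 𝒜 ∈ Γ.mem (ℕ → Bool)) :
    chi '' (OSet f 𝒜) ∈ Γ.mem (ℕ → Bool) := by
  have hTmem : SInf ∩ ((Prod.snd ⁻¹' (chi '' 𝒜)) ∩ (SEset f ∩ SOset f)) ∈ Γ.mem Pr := by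
    apply gamma_inter Γ (SInf_gamma Γ)
    apply gamma_inter Γ
    · exact Γ.preimage_mem Pr (ℕ → Bool) Prod.snd (chi '' 𝒜) continuous_snd hmem
    · exact gamma_inter Γ (SEset_gamma Γ f) (SOset_gamma Γ f)
  have heq : chi '' (OSet f 𝒜) =
      Prod.fst '' (SInf ∩ ((Prod.snd ⁻¹' (chi '' 𝒜)) ∩ (SEset f ∩ SOset f))) := by
    ext fb
    constructor
    · rintro ⟨x, hx, rfl⟩
      obtain ⟨hxinf, A, hA, hE, hO⟩ := hx
      refine ⟨(chi x, chi A), ⟨?_, ⟨?_, ?_, ?_⟩⟩, rfl⟩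
      · exact (SInf_iff x (chi A)).mpr hxinf
      · exact ⟨A, hA, rfl⟩
      · exact (SEset_iff f hxinf A).mpr hE
      · exact (SOset_iff f hxinf A).mpr hO
    · rintro ⟨⟨fb1, fb2⟩, ⟨hinf', hmem', hE', hO'⟩, rfl⟩
      obtain ⟨A, hA, hchiA⟩ := hmem'
      have hfb1 : chi {n | fb1 n = true} = fb1 := chi_of_setOf fb1
      have hxinf : ({n | fb1 n = true} : Set ℕ).Infinite := by
        apply (SInf_iff {n | fb1 n = true} fb2).mp
        rw [hfb1]
        exact hinf'
      refine ⟨{n | fb1 n = true}, ⟨hxinf, A, hA, ?_, ?_⟩, hfb1⟩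
      · apply (SEset_iff f hxinf A).mp
        rw [hfb1, hchiA]
        exact hE'
      · apply (SOset_iff f hxinf A).mp
        rw [hfb1, hchiA]
        exact hO'
  rw [heq]
  exact Γ.image_mem Pr (ℕ → Bool) Prod.fst _ continuous_fst hTmem

end Gamma

end NoMadDev

open NoMadDev in
theorem no_dedekind_infinite_mad_family_in_good_pointclass (Γ : GoodPointclass)
    (hRamsey : ∀ X : Set (Set ℕ), (∀ x ∈ X, x.Infinite) →
      chi '' X ∈ Γ.mem (ℕ → Bool) → RamseyProp X) :
    ¬ ∃ 𝒜 : Set (Set ℕ), IsMadFamily 𝒜 ∧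
      (∃ f : ℕ → Set ℕ, Function.Injective f ∧ ∀ n, f n ∈ 𝒜) ∧
      chi '' 𝒜 ∈ Γ.mem (ℕ → Bool) := by
  rintro ⟨𝒜, ⟨hA1, hA2, hA3⟩, ⟨f, hf, hfm⟩, hGam⟩
  have hOmem : chi '' (OSet f 𝒜) ∈ Γ.mem (ℕ → Bool) := OSet_gamma Γ f hGam
  have hOinf : ∀ x ∈ OSet f 𝒜, x.Infinite := fun x hx => hx.1
  obtain ⟨H, hH, hcase⟩ := hRamsey (OSet f 𝒜) hOinf hOmem
  obtain ⟨A₁, hA₁mem, hA₁ne, hS⟩ := supply hA1 hA2 hA3 hf hfm hH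
  rcases hcase with hall | hnone
  · obtain ⟨x, hxsub, hxinf, hxnot⟩ := all_refuter hA1 hA2 hf hfm hH hA₁mem hA₁ne hS
    exact hxnot (hall x hxinf hxsub)
  · obtain ⟨x, hxsub, hxinf, hxin⟩ := none_refuter hA1 hA2 hf hfm hH hA₁mem hS
    exact (hnone x hxinf hxsub) hxin
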